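/- Main theorem (explicit formula): Under the assumptions a_{-r} ≠ 0, totally upwind (p = 0), Cauchy-stability and consistency (which imply |a_0| < 1), the intrinsic Kreiss-Lopatinskii determinant Δ(z) = det(B K_{-r,m-1}(z)) / det K_{0,r-1}(z) satisfies, for all |z| ≥ 1, Δ(z) = (-1)^{r(m-r)} det C(z) · (a_{-r}/(a_0 − z))^{m−r}, where C(z) is the r×r polynomial matrix produced by the reduction lemma applied to the boundary matrix B ∈ M_{r,r+m}(ℂ). -/

import Mathlib

open Matrix Polynomial Finset


noncomputable def Ds (s : ℂ) (p : ℂ[X]) : ℂ[X] := C s * p + X * derivative p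

lemma Ds_coeff (s : ℂ) (p : ℂ[X]) (n : ℕ) :
    (Ds s p).coeff n = (s + n) * p.coeff n := by
  unfold Ds
  rw [coeff_add, coeff_C_mul]
  cases n with
  | zero => simp [mul_coeff_zero]
  | succ k => rw [coeff_X_mul, coeff_derivative]; push_cast; ring

lemma Ds_iter_coeff (s : ℂ) (t : ℕ) (p : ℂ[X]) (n : ℕ) :
    ((Ds s)^[t] p).coeff n = (s + n) ^ t * p.coeff n := by
  induction t generalizing p with
  | zero => simp
  | succ k ih =>
      rw [Function.iterate_succ_apply, ih, Ds_coeff, pow_succ]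
      ring

lemma Ds_iter_natDegree_le (s : ℂ) (t : ℕ) (p : ℂ[X]) :
    ((Ds s)^[t] p).natDegree ≤ p.natDegree := by
  rw [natDegree_le_iff_coeff_eq_zero]
  intro N hN
  simp [Ds_iter_coeff, coeff_eq_zero_of_natDegree_lt hN]

lemma Ds_iter_eval (s x : ℂ) (t : ℕ) (p : ℂ[X]) {d : ℕ} (hd : p.natDegree < d) :
    eval x ((Ds s)^[t] p) = ∑ i ∈ Finset.range d, (s + i) ^ t * p.coeff i * x ^ i := by
  rw [eval_eq_sum_range' (lt_of_le_of_lt (Ds_iter_natDegree_le s t p) hd)]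
  exact Finset.sum_congr rfl fun i _ => by rw [Ds_iter_coeff]

lemma Ds_dvd (s x : ℂ) (b : ℕ) (p : ℂ[X]) (h : (X - C x) ^ (b + 1) ∣ p) :
    (X - C x) ^ b ∣ Ds s p := by
  obtain ⟨g, rfl⟩ := h
  unfold Ds
  rw [derivative_mul, derivative_pow]
  apply dvd_add
  · exact Dvd.dvd.mul_left (dvd_mul_of_dvd_left (pow_dvd_pow _ (Nat.le_succ b)) g) _
  · rw [mul_add]
    apply dvd_add
    · simp only [derivative_X_sub_C, mul_one]
      exact Dvd.dvd.mul_left (Dvd.dvd.mul_right (Dvd.dvd.mul_left (dvd_refl _) _) _) _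
    · exact Dvd.dvd.mul_left (dvd_mul_of_dvd_left (pow_dvd_pow _ (Nat.le_succ b)) _) _

lemma Ds_iter_eval_zero (s x : ℂ) {t b : ℕ} (ht : t < b) {p : ℂ[X]}
    (h : (X - C x) ^ b ∣ p) : eval x ((Ds s)^[t] p) = 0 := by
  induction t generalizing p b with
  | zero =>
      obtain ⟨g, rfl⟩ := h
      simp only [Function.iterate_zero, id_eq, eval_mul, eval_pow, eval_sub, eval_X, eval_C,
        sub_self]
      rw [zero_pow (by omega), zero_mul]
  | succ k ih =>
      rw [Function.iterate_succ_apply]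
      exact ih (b := b - 1) (by omega) (Ds_dvd s x _ p (by rwa [Nat.sub_add_cancel (by omega)]) )

lemma core_sum_zero (x s : ℂ) {b t : ℕ} (ht : t < b) {p : ℂ[X]}
    (hdvd : (X - C x) ^ b ∣ p) {d : ℕ} (hdeg : p.natDegree < d) :
    ∑ i ∈ Finset.range d, (s + i) ^ t * p.coeff i * x ^ i = 0 := by
  rw [← Ds_iter_eval s x t p hdeg, Ds_iter_eval_zero s x ht hdvd]

lemma Ds_zero_iter_eval_factor (x : ℂ) (t : ℕ) (g : ℂ[X]) :
    eval x ((Ds 0)^[t] ((X - C x) ^ t * g)) = (Nat.factorial t : ℂ) * x ^ t * eval x g := by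
  induction t generalizing g with
  | zero => simp
  | succ k ih =>
      rw [Function.iterate_succ_apply]
      have hD : Ds 0 ((X - C x) ^ (k+1) * g)
          = (X - C x) ^ k * ((((k : ℕ) + 1 : ℕ) : ℂ[X]) * X * g + (X - C x) * (X * derivative g)) := by
        unfold Ds
        rw [derivative_mul, derivative_pow, derivative_X_sub_C]
        simp only [C_0, zero_mul, mul_one, C_add, C_1, C_eq_natCast]
        push_cast
        ring
      rw [hD, ih]
      simp only [eval_add, eval_mul, eval_sub, eval_X, eval_C, sub_self, zero_mul, mul_zero,
        add_zero, eval_natCast]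
      rw [Nat.factorial_succ]
      push_cast
      ring

lemma dvd_of_Ds_eval (x : ℂ) (hx : x ≠ 0) (p : ℂ[X]) (b : ℕ)
    (h : ∀ t < b, eval x ((Ds 0)^[t] p) = 0) : (X - C x) ^ b ∣ p := by
  induction b with
  | zero => simp
  | succ k ih =>
      obtain ⟨g, hpg⟩ := ih fun t ht => h t (by omega)
      have hk := h k (by omega)
      rw [hpg, Ds_zero_iter_eval_factor] at hk
      have hg : eval x g = 0 := by
        have h1 : (Nat.factorial k : ℂ) ≠ 0 := Nat.cast_ne_zero.mpr (Nat.factorial_ne_zero k)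
        have h2 : x ^ k ≠ 0 := pow_ne_zero k hx
        rcases mul_eq_zero.mp hk with h' | h'
        · exact absurd h' (mul_ne_zero h1 h2)
        · exact h'
      rw [hpg, pow_succ]
      exact mul_dvd_mul_left _ (dvd_iff_isRoot.mpr hg)


section shift
variable {r M : ℕ} (κ : Fin M → ℂ) (β : Fin M → ℕ) (e : (Σ j : Fin M, Fin (β j)) ≃ Fin r)

noncomputable def Kshift (s : ℕ) : Matrix (Fin r) (Fin r) ℂ :=
  Matrix.of fun i c => (((i : ℕ) + s : ℕ) : ℂ) ^ ((e.symm c).2 : ℕ)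
    * κ (e.symm c).1 ^ ((i : ℕ) + s)

lemma Qprod_natDegree : (∏ j, (X - C (κ j)) ^ β j).natDegree = ∑ j, β j := by
  rw [natDegree_prod]
  · exact Finset.sum_congr rfl fun j _ => by
      rw [natDegree_pow, natDegree_X_sub_C, mul_one]
  · intro j _
    exact pow_ne_zero _ (X_sub_C_ne_zero _)

lemma Qprod_coeff_zero : (∏ j, (X - C (κ j)) ^ β j).coeff 0
    = (-1) ^ (∑ j, β j) * ∏ j, κ j ^ β j := by
  rw [coeff_zero_eq_eval_zero, eval_prod, ← Finset.prod_pow_eq_pow_sum, ← Finset.prod_mul_distrib]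
  exact Finset.prod_congr rfl fun j _ => by
    rw [eval_pow, eval_sub, eval_X, eval_C, zero_sub, neg_pow]

lemma Kshift_det (hr : 1 ≤ r) (hβ : ∑ j, β j = r) (s : ℕ) :
    (Kshift κ β e s).det = (∏ j, κ j ^ β j) ^ s * (Kshift κ β e 0).det := by
  set Q : ℂ[X] := ∏ j, (X - C (κ j)) ^ β j with hQ
  have hQdeg : Q.natDegree = r := by rw [hQ, Qprod_natDegree, hβ]
  have hQmonic : Q.Monic := monic_prod_of_monic _ _ fun j _ => (monic_X_sub_C _).pow _
  have hQr : Q.coeff r = 1 := by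
    have := hQmonic.leadingCoeff
    rwa [leadingCoeff, hQdeg] at this
  -- companion matrix
  set Comp : Matrix (Fin r) (Fin r) ℂ := Matrix.of fun i j =>
    if (i : ℕ) + 1 < r then (if (j : ℕ) = (i : ℕ) + 1 then 1 else 0)
    else -Q.coeff (j : ℕ) with hComp
  have hstep : ∀ s : ℕ, Kshift κ β e (s + 1) = Comp * Kshift κ β e s := by
    intro s
    ext i c
    set t : ℕ := ((e.symm c).2 : ℕ) with ht
    set x : ℂ := κ (e.symm c).1 with hx
    have htβ : t < β (e.symm c).1 := (e.symm c).2.isLt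
    rw [Matrix.mul_apply]
    by_cases h : (i : ℕ) + 1 < r
    · have : ∀ j : Fin r, Comp i j * Kshift κ β e s j c
          = if j = (⟨(i : ℕ) + 1, h⟩ : Fin r) then Kshift κ β e s j c else 0 := by
        intro j
        rw [hComp]
        by_cases hj : j = (⟨(i : ℕ) + 1, h⟩ : Fin r)
        · simp [hj, h]
        · have : ¬ ((j : ℕ) = (i : ℕ) + 1) := fun hc => hj (Fin.ext hc)
          simp [h, this, hj]
      rw [Finset.sum_congr rfl fun j _ => this j, Finset.sum_ite_eq' Finset.univ]
      simp only [Finset.mem_univ, if_true]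
      show Kshift κ β e (s+1) i c = Kshift κ β e s ⟨(i:ℕ)+1, h⟩ c
      unfold Kshift
      simp only [Matrix.of_apply]
      have h1 : (i : ℕ) + (s + 1) = (i : ℕ) + 1 + s := by omega
      rw [h1]
    · -- i is the last row
      have hi : (i : ℕ) + 1 = r := by have := i.isLt; omega
      have hdvd : (X - C x) ^ (β (e.symm c).1) ∣ Q :=
        Finset.dvd_prod_of_mem _ (Finset.mem_univ _)
      have h0 := core_sum_zero x (s : ℂ) htβ hdvd (d := r + 1) (by omega)
      have h2 : ∑ n ∈ Finset.range (r + 1), ((s : ℂ) + n) ^ t * Q.coeff n * x ^ (n + s) = 0 := by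
        have := congrArg (· * x ^ s) h0
        simpa [Finset.sum_mul, mul_assoc, pow_add] using this
      rw [Finset.sum_range_succ, hQr] at h2
      rw [← Fin.sum_univ_eq_sum_range
        (fun n => ((s : ℂ) + n) ^ t * Q.coeff n * x ^ (n + s)) r] at h2
      have h3 : ∑ j : Fin r, ((s : ℂ) + (j : ℕ)) ^ t * Q.coeff (j : ℕ) * x ^ ((j : ℕ) + s)
          = -(((s : ℂ) + r) ^ t * 1 * x ^ (r + s)) := by linear_combination h2
      have hlhs : ∑ j : Fin r, Comp i j * Kshift κ β e s j c
          = -∑ j : Fin r, ((s : ℂ) + (j : ℕ)) ^ t * Q.coeff (j : ℕ) * x ^ ((j : ℕ) + s) := by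
        rw [← Finset.sum_neg_distrib]
        refine Finset.sum_congr rfl fun j _ => ?_
        rw [hComp]
        unfold Kshift
        simp only [Matrix.of_apply, if_neg h]
        push_cast
        ring
      rw [hlhs, h3]
      unfold Kshift
      simp only [Matrix.of_apply, neg_neg]
      have : (i : ℕ) + (s + 1) = r + s := by omega
      rw [this]
      push_cast
      ring
  -- determinant of the companion matrix
  obtain ⟨r', rfl⟩ : ∃ r', r = r' + 1 := ⟨r - 1, by omega⟩
  have hCompdet : Comp.det = ∏ j, κ j ^ β j := by
    set T : Matrix (Fin (r' + 1)) (Fin (r' + 1)) ℂ := Matrix.of fun k j =>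
      if (k : ℕ) = 0 then -Q.coeff (j : ℕ) else (if (k : ℕ) = (j : ℕ) then 1 else 0) with hT
    have hCT : Comp = T.submatrix (finRotate (r' + 1)) id := by
      ext i j
      have hrot : ((finRotate (r' + 1) i : Fin (r' + 1)) : ℕ)
          = if (i : ℕ) + 1 < r' + 1 then (i : ℕ) + 1 else 0 := by
        rw [finRotate_succ_apply, Fin.val_add_one]
        by_cases hi : i = Fin.last r'
        · rw [if_pos hi, if_neg (by rw [hi, Fin.val_last]; omega)]
        · rw [if_neg hi, if_pos (by have := Fin.val_lt_last hi; omega)]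
      rw [hComp, hT]
      simp only [Matrix.of_apply, Matrix.submatrix_apply, id_eq]
      rw [hrot]
      by_cases h : (i : ℕ) + 1 < r' + 1
      · rw [if_pos h, if_pos h, if_neg (show ¬((i:ℕ)+1 = 0) by omega)]
        by_cases hj : (j : ℕ) = (i : ℕ) + 1
        · rw [if_pos hj, if_pos hj.symm]
        · rw [if_neg hj, if_neg (fun hc => hj hc.symm)]
      · rw [if_neg h, if_neg h, if_pos rfl]
    have hdetT : T.det = -Q.coeff 0 := by
      have htri : T.BlockTriangular id := by
        intro k j hkj
        rw [hT]
        simp only [Matrix.of_apply]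
        have h1 : (j : ℕ) < (k : ℕ) := hkj
        rw [if_neg (by omega), if_neg (by omega)]
      rw [Matrix.det_of_upperTriangular htri]
      rw [Finset.prod_eq_single (0 : Fin (r' + 1))]
      · simp [hT]
      · intro k _ hk
        have : (k : ℕ) ≠ 0 := fun hc => hk (Fin.ext hc)
        simp [hT, this, hk]
      · simp
    have hQ0 : Q.coeff 0 = (-1) ^ (r' + 1) * ∏ j, κ j ^ β j := by
      rw [hQ, Qprod_coeff_zero, hβ]
    rw [hCT, Matrix.det_permute, hdetT, hQ0, sign_finRotate]
    simp only [Int.reduceNeg, Units.val_pow_eq_pow_val]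
    push_cast
    ring_nf
    have h1 : ((-1:ℂ))^(r'*2) = 1 := by rw [mul_comm, pow_mul]; norm_num
    rw [h1, mul_one]
  induction s with
  | zero => simp
  | succ n ih =>
      rw [hstep n, Matrix.det_mul, hCompdet, ih, pow_succ]
      ring
end shift

lemma charPoly_coeff (r : ℕ) (a : ℤ → ℂ) (z : ℂ) (i : ℕ) (hi : i ≤ r) :
    ((∑ k ∈ Finset.Icc (-(r:ℤ)) 0, C (a k) * X ^ ((r:ℤ)+k).toNat) - C z * X ^ r).coeff i
    = a ((i:ℤ) - r) - if i = r then z else 0 := by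
  rw [coeff_sub, finset_sum_coeff]
  congr 1
  · rw [Finset.sum_eq_single ((i:ℤ) - r)]
    · rw [coeff_C_mul, coeff_X_pow, if_pos (by omega), mul_one]
    · intro k hk hne
      rw [coeff_C_mul, coeff_X_pow, if_neg (by
        simp only [Finset.mem_Icc] at hk; omega), mul_zero]
    · intro h
      exact absurd (Finset.mem_Icc.mpr ⟨by omega, by omega⟩) h
  · rw [coeff_C_mul, coeff_X_pow]
    by_cases h : i = r <;> simp [h]

lemma charPoly_natDegree_le (r : ℕ) (a : ℤ → ℂ) (z : ℂ) :
    ((∑ k ∈ Finset.Icc (-(r:ℤ)) 0, C (a k) * X ^ ((r:ℤ)+k).toNat) - C z * X ^ r).natDegree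
      ≤ r := by
  rw [natDegree_le_iff_coeff_eq_zero]
  intro N hN
  rw [coeff_sub, finset_sum_coeff]
  rw [Finset.sum_eq_zero fun k hk => by
    rw [coeff_C_mul, coeff_X_pow, if_neg (by
      simp only [Finset.mem_Icc] at hk; omega), mul_zero]]
  rw [coeff_C_mul, coeff_X_pow, if_neg (by omega), mul_zero, sub_zero]
/-- Main theorem (explicit formula): under non-degeneracy, total upwinding,
Cauchy-stability and consistency, the intrinsic Kreiss-Lopatinskii determinant
`Δ(z) = det(B K_{-r,m-1}(z)) / det K_{0,r-1}(z)` equals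
`(-1)^{r(m-r)} det C(z) (a_{-r}/(a₀-z))^{m-r}` for `|z| ≥ 1`. -/
theorem intrinsic_KL_determinant_formula (r m M : ℕ) (hr : 1 ≤ r) (hrm : r ≤ m)
    (a : ℤ → ℂ) (ha : a (-(r:ℤ)) ≠ 0)
    -- Cauchy-stability
    (hstab : ∀ ξ : ℝ, ‖∑ k ∈ Finset.Icc (-(r:ℤ)) 0,
      a k * Complex.exp (Complex.I * k * ξ)‖ ≤ 1)
    -- consistency at order 1
    (lam : ℝ) (hlam : lam ≠ 0)
    (hcons1 : ∑ k ∈ Finset.Icc (-(r:ℤ)) 0, a k = 1)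
    (hcons2 : ∑ k ∈ Finset.Icc (-(r:ℤ)) 0, (k : ℂ) * a k = -(lam : ℂ))
    -- boundary matrix B = (I_r | -b)
    (b : Matrix (Fin r) (Fin m) ℂ) (B : Matrix (Fin r) (Fin (r + m)) ℂ)
    (hB : ∀ (i : Fin r) (j : Fin (r + m)),
      B i j = if h : (j : ℕ) < r then (if (j : ℕ) = (i : ℕ) then 1 else 0)
        else -b i ⟨(j : ℕ) - r, by omega⟩)
    (z : ℂ) (hz : 1 ≤ ‖z‖)
    -- roots of the characteristic equation, with multiplicities
    (κ : Fin M → ℂ) (hκ0 : ∀ j, κ j ≠ 0) (hinj : Function.Injective κ)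
    (β : Fin M → ℕ) (hβ : ∑ j, β j = r)
    (hfact : (∑ k ∈ Finset.Icc (-(r:ℤ)) 0, C (a k) * X ^ ((r : ℤ) + k).toNat)
        - C z * X ^ r
      = C (a 0 - z) * ∏ j, (X - C (κ j)) ^ β j)
    (e : (Σ j : Fin M, Fin (β j)) ≃ Fin r)
    -- the matrices K_{-r,m-1}(z) and K_{0,r-1}(z)
    (Kfull : Matrix (Fin (r + m)) (Fin r) ℂ)
    (hKfull : ∀ (i : Fin (r + m)) (c : Fin r),
      Kfull i c = (((i : ℤ) - r : ℤ) : ℂ) ^ ((e.symm c).2 : ℕ)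
        * κ (e.symm c).1 ^ ((i : ℤ) - r))
    (K0 : Matrix (Fin r) (Fin r) ℂ)
    (hK0 : ∀ (i c : Fin r),
      K0 i c = ((i : ℕ) : ℂ) ^ ((e.symm c).2 : ℕ) * κ (e.symm c).1 ^ (i : ℕ))
    -- the matrix C(z) produced by the reduction lemma
    (Cmat : Matrix (Fin r) (Fin r) ℂ)
    (hCmat : ∀ U : Fin (r + m) → ℂ,
      (∀ j : ℕ, (hj : j < m) →
        (∑ k : Fin r, a ((k : ℤ) - r) * U ⟨j + (k : ℕ), by omega⟩)
          + (a 0 - z) * U ⟨j + r, by omega⟩ = 0) →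
      B.mulVec U = (Matrix.of fun (i : Fin r) (j : Fin (r + m)) =>
        if h : (j : ℕ) < m then 0 else Cmat i ⟨(j : ℕ) - m, by omega⟩).mulVec U) :
    (B * Kfull).det / K0.det
      = (-1) ^ (r * (m - r)) * Cmat.det * (a (-(r:ℤ)) / (a 0 - z)) ^ (m - r) := by

  classical
  set P : ℂ[X] := (∑ k ∈ Finset.Icc (-(r:ℤ)) 0, C (a k) * X ^ ((r : ℤ) + k).toNat)
      - C z * X ^ r with hPdef
  have hPdeg : P.natDegree ≤ r := charPoly_natDegree_le r a z
  have hPcoeff : ∀ i : ℕ, i ≤ r → P.coeff i = a ((i:ℤ) - r) - if i = r then z else 0 :=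
    fun i hi => charPoly_coeff r a z i hi
  set d : ℂ := ∏ j, κ j ^ β j with hddef
  -- a 0 - z ≠ 0
  have haz : a 0 - z ≠ 0 := by
    intro h
    have h0 : P.coeff 0 = 0 := by rw [hfact, h]; simp
    rw [hPcoeff 0 (by omega), if_neg (by omega), sub_zero] at h0
    have e0 : ((0:ℕ):ℤ) - r = -(r:ℤ) := by omega
    rw [e0] at h0
    exact ha h0
  -- the coefficient relation giving d
  have hd : a (-(r:ℤ)) = (a 0 - z) * ((-1)^r * d) := by
    have h0 : P.coeff 0 = (a 0 - z) * ((-1)^r * d) := by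
      rw [hfact, coeff_C_mul, Qprod_coeff_zero, hβ]
    rw [hPcoeff 0 (by omega), if_neg (by omega), sub_zero] at h0
    have e0 : ((0:ℕ):ℤ) - r = -(r:ℤ) := by omega
    rwa [e0] at h0
  -- the columns of Kfull satisfy the recurrence
  have hcol : ∀ c : Fin r, ∀ j : ℕ, (hj : j < m) →
      (∑ k : Fin r, a ((k : ℤ) - r) * Kfull ⟨j + (k : ℕ), by omega⟩ c)
        + (a 0 - z) * Kfull ⟨j + r, by omega⟩ c = 0 := by
    intro c j hj
    set x : ℂ := κ (e.symm c).1 with hxdef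
    set t : ℕ := ((e.symm c).2 : ℕ) with htdef
    have hx : x ≠ 0 := hκ0 _
    have htβ : t < β (e.symm c).1 := (e.symm c).2.isLt
    have hdvd : (X - C x) ^ (β (e.symm c).1) ∣ P := by
      rw [hfact]
      exact Dvd.dvd.mul_left (Finset.dvd_prod_of_mem _ (Finset.mem_univ _)) _
    have h0 := core_sum_zero x ((j:ℂ) - r) htβ hdvd (d := r + 1)
      (lt_of_le_of_lt hPdeg (lt_add_one r))
    have h2 : ∑ i ∈ Finset.range (r+1),
        ((j:ℂ) - r + i) ^ t * P.coeff i * x ^ ((j:ℤ) - r + i) = 0 := by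
      have h1 := congrArg (· * x ^ ((j:ℤ) - r)) h0
      simp only [Finset.sum_mul, zero_mul] at h1
      rw [← h1]
      refine Finset.sum_congr rfl fun i _ => ?_
      rw [zpow_add₀ hx, zpow_natCast]
      ring
    rw [Finset.sum_range_succ, ← Fin.sum_univ_eq_sum_range
      (fun i => ((j:ℂ) - r + i) ^ t * P.coeff i * x ^ ((j:ℤ) - r + i)) r] at h2
    have hterm : ∀ k : Fin r, a ((k:ℤ) - r) * Kfull ⟨j + (k:ℕ), by omega⟩ c
        = ((j:ℂ) - r + (k:ℕ)) ^ t * P.coeff (k:ℕ) * x ^ ((j:ℤ) - r + (k:ℕ)) := by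
      intro k
      rw [hKfull, hPcoeff (k:ℕ) (by omega), if_neg (by omega), sub_zero]
      have e1 : ((⟨j + (k:ℕ), by omega⟩ : Fin (r+m)) : ℤ) - r = (j:ℤ) - r + (k:ℕ) := by
        simp only [Fin.val_mk]; omega
      rw [e1]
      push_cast
      ring
    have hlast : (a 0 - z) * Kfull ⟨j + r, by omega⟩ c
        = ((j:ℂ) - r + (r:ℕ)) ^ t * P.coeff r * x ^ ((j:ℤ) - r + (r:ℕ)) := by
      rw [hKfull, hPcoeff r le_rfl, if_pos rfl]
      have e1 : ((⟨j + r, by omega⟩ : Fin (r+m)) : ℤ) - r = (j:ℤ) - r + (r:ℕ) := by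
        simp only [Fin.val_mk]; omega
      have e2 : ((r:ℕ):ℤ) - (r:ℕ) = 0 := by omega
      rw [e1, e2]
      push_cast
      ring
    rw [Finset.sum_congr rfl fun k _ => hterm k, hlast]
    exact h2
  -- reduce B * Kfull to Cmat * Klast
  set Klast : Matrix (Fin r) (Fin r) ℂ :=
    Matrix.of (fun q c => Kfull ⟨m + (q:ℕ), by omega⟩ c) with hKlastdef
  have hmul : B * Kfull = Cmat * Klast := by
    ext i c
    have hred := hCmat (fun i' => Kfull i' c) (hcol c)
    have h1 : (B * Kfull) i c = B.mulVec (fun i' => Kfull i' c) i := by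
      rw [Matrix.mul_apply]; rfl
    rw [h1, hred]
    show ∑ j : Fin (r+m), (Matrix.of fun (i : Fin r) (j : Fin (r + m)) =>
        if h : (j : ℕ) < m then 0 else Cmat i ⟨(j : ℕ) - m, by omega⟩) i j * Kfull j c
      = (Cmat * Klast) i c
    rw [Matrix.mul_apply]
    rw [← Equiv.sum_comp (finCongr (Nat.add_comm m r)) (fun j : Fin (r+m) =>
      (Matrix.of fun (i : Fin r) (j : Fin (r + m)) =>
        if h : (j : ℕ) < m then 0 else Cmat i ⟨(j : ℕ) - m, by omega⟩) i j * Kfull j c)]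
    rw [Fin.sum_univ_add]
    have hz1 : ∀ p : Fin m, (Matrix.of fun (i : Fin r) (j : Fin (r + m)) =>
        if h : (j : ℕ) < m then 0 else Cmat i ⟨(j : ℕ) - m, by omega⟩) i
          (finCongr (Nat.add_comm m r) (Fin.castAdd r p))
          * Kfull (finCongr (Nat.add_comm m r) (Fin.castAdd r p)) c = 0 := by
      intro p
      have : ((finCongr (Nat.add_comm m r) (Fin.castAdd r p) : Fin (r+m)) : ℕ) = (p : ℕ) := rfl
      rw [Matrix.of_apply, dif_pos (by rw [this]; exact p.isLt), zero_mul]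
    rw [Finset.sum_congr rfl fun p _ => hz1 p, Finset.sum_const, smul_zero, zero_add]
    refine Finset.sum_congr rfl fun q _ => ?_
    have hval : ((finCongr (Nat.add_comm m r) (Fin.natAdd m q) : Fin (r+m)) : ℕ)
        = m + (q : ℕ) := rfl
    rw [Matrix.of_apply, dif_neg (by rw [hval]; omega)]
    rw [hKlastdef, Matrix.of_apply]
    congr 1
    · congr 1
      exact Fin.ext (by simp [hval])
  -- Klast is the shifted matrix, K0 the unshifted one
  have hKlast : Klast = Kshift κ β e (m - r) := by
    ext q c
    rw [hKlastdef, Matrix.of_apply, hKfull]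
    have e1 : ((⟨m + (q:ℕ), by omega⟩ : Fin (r+m)) : ℤ) - r
        = (((q:ℕ) + (m - r) : ℕ) : ℤ) := by simp only [Fin.val_mk]; omega
    rw [e1, zpow_natCast]
    show _ = (((q:ℕ) + (m - r) : ℕ) : ℂ) ^ ((e.symm c).2 : ℕ)
      * κ (e.symm c).1 ^ ((q:ℕ) + (m - r))
    norm_cast
  have hK0eq : K0 = Kshift κ β e 0 := by
    ext i c
    rw [hK0]
    show _ = (((i:ℕ) + 0 : ℕ) : ℂ) ^ ((e.symm c).2 : ℕ) * κ (e.symm c).1 ^ ((i:ℕ) + 0)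
    norm_num
  -- K0 is invertible
  have hK0ne : K0.det ≠ 0 := by
    intro hdet0
    obtain ⟨v, hv, hKv⟩ : ∃ v, v ≠ 0 ∧ K0ᵀ.mulVec v = 0 :=
      (Matrix.exists_mulVec_eq_zero_iff).mpr (by rw [Matrix.det_transpose]; exact hdet0)
    set p : ℂ[X] := ∑ i : Fin r, C (v i) * X ^ (i:ℕ) with hpdef
    have hpcoeff : ∀ n : Fin r, p.coeff (n:ℕ) = v n := by
      intro n
      rw [hpdef, finset_sum_coeff, Finset.sum_eq_single n]
      · rw [coeff_C_mul, coeff_X_pow, if_pos rfl, mul_one]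
      · intro i _ hne
        rw [coeff_C_mul, coeff_X_pow, if_neg (fun hc => hne (Fin.ext hc.symm)), mul_zero]
      · simp
    have hpne : p ≠ 0 := by
      obtain ⟨i, hi⟩ := Function.ne_iff.mp hv
      intro h0
      apply hi
      rw [← hpcoeff i, h0, coeff_zero]
      rfl
    have hpdeg : p.natDegree < r := by
      have hle : p.natDegree ≤ r - 1 := by
        rw [natDegree_le_iff_coeff_eq_zero]
        intro N hN
        rw [hpdef, finset_sum_coeff]
        refine Finset.sum_eq_zero fun i _ => ?_
        rw [coeff_C_mul, coeff_X_pow, if_neg (by have := i.isLt; omega), mul_zero]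
      omega
    have hdvd : ∀ j : Fin M, (X - C (κ j)) ^ (β j) ∣ p := by
      intro j
      apply dvd_of_Ds_eval (κ j) (hκ0 j) p (β j)
      intro t ht
      rw [Ds_iter_eval 0 (κ j) t p hpdeg]
      rw [← Fin.sum_univ_eq_sum_range (fun n => ((0:ℂ) + n) ^ t * p.coeff n * κ j ^ n) r]
      have hc := congrFun hKv (e ⟨j, ⟨t, ht⟩⟩)
      simp only [Matrix.mulVec, dotProduct, Matrix.transpose_apply,
        Pi.zero_apply] at hc
      refine Eq.trans (Finset.sum_congr rfl fun i _ => ?_) hc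
      rw [hK0, hpcoeff, Equiv.symm_apply_apply]
      push_cast
      ring
    have hQdvd : (∏ j, (X - C (κ j)) ^ (β j)) ∣ p := by
      apply Finset.prod_dvd_of_coprime
      · intro i _ j hj hne
        exact ((Polynomial.pairwise_coprime_X_sub_C hinj) hne).pow
      · exact fun j _ => hdvd j
    have hdegQ := Polynomial.natDegree_le_of_dvd hQdvd hpne
    rw [Qprod_natDegree, hβ] at hdegQ
    omega
  -- ratio a(-r)/(a0 - z)
  have hratio : a (-(r:ℤ)) / (a 0 - z) = (-1)^r * d := by
    field_simp
    linear_combination hd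
  -- assemble
  have hfin : (B * Kfull).det = Cmat.det * (d ^ (m - r) * K0.det) := by
    rw [hmul, Matrix.det_mul, hKlast, hK0eq, Kshift_det κ β e hr hβ (m - r)]
  rw [hfin, div_eq_iff hK0ne, hratio, mul_pow, ← pow_mul]
  have hs : ((-1:ℂ)) ^ (r * (m - r)) * ((-1:ℂ)) ^ (r * (m - r)) = 1 := by
    rw [← mul_pow]; norm_num
  linear_combination (-(Cmat.det * d ^ (m - r) * K0.det)) * hs
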